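/- (Polar excess versus GSV-index, local identity.) Let P, Q, f, g, k, ηₓ, η_y ∈ ℂ[[x,y]] satisfy the decomposition g·P = k·∂ₓf + f·ηₓ and g·Q = k·∂_yf + f·η_y (i.e., gω = k df + fη for ω = P dx + Q dy). Let γ be a formal parametrization with f∘γ = 0, g∘γ ≠ 0, k∘γ ≠ 0, and (∂ₓf∘γ, ∂_yf∘γ) ≠ (0,0). Then for every (a,b) ∈ ℂ²: (g∘γ)·((aP + bQ)∘γ) = (k∘γ)·((a∂ₓf + b∂_yf)∘γ). Consequently min(ord_t(P∘γ), ord_t(Q∘γ)) = ord_t(k∘γ) − ord_t(g∘γ) + min(ord_t(∂ₓf∘γ), ord_t(∂_yf∘γ)); equivalently, for any H ∈ ℂ[[x,y]] with H∘γ ≠ 0, the relative polar excess satisfies (𝒫^{ω}, γ) − (𝒫^{d(f/H)}, γ) = [ord_t(k∘γ) − ord_t(g∘γ)] + ord_t(H∘γ), which is the paper's identity var^rel(F,B) = GSV(F,B) + ((F)_∞, B). -/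

import Mathlib

/-- Substitution `F(x(t), y(t))` of a two-variable formal power series `F ∈ ℂ[[x,y]]`
along a pair of one-variable formal power series (a formal parametrization `γ = (x, y)`;
this is the usual substitution when `x` and `y` have zero constant term, since then
`coeff n (x ^ i * y ^ j) = 0` whenever `i + j > n`). -/
noncomputable def pcomp (F : MvPowerSeries (Fin 2) ℂ) (x y : PowerSeries ℂ) : PowerSeries ℂ :=
  PowerSeries.mk fun n => ∑ p ∈ Finset.range (n + 1) ×ˢ Finset.range (n + 1),
    MvPowerSeries.coeff (Finsupp.single (0 : Fin 2) p.1 + Finsupp.single (1 : Fin 2) p.2) F *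
      PowerSeries.coeff n (x ^ p.1 * y ^ p.2)

/-- Formal partial derivative `∂F/∂xᵢ` of a two-variable formal power series. -/
noncomputable def pderiv2 (i : Fin 2) (F : MvPowerSeries (Fin 2) ℂ) : MvPowerSeries (Fin 2) ℂ :=
  fun d => ((d i : ℂ) + 1) * MvPowerSeries.coeff (d + Finsupp.single i 1) F

open Finset in
lemma fin2_eta (d : Fin 2 →₀ ℕ) :
    Finsupp.single (0 : Fin 2) (d 0) + Finsupp.single (1 : Fin 2) (d 1) = d := by
  ext i
  fin_cases i <;> simp

lemma coeff_vanish (x y : PowerSeries ℂ) (hx : PowerSeries.constantCoeff x = 0)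
    (hy : PowerSeries.constantCoeff y = 0) {i j n : ℕ} (h : n < i + j) :
    PowerSeries.coeff n (x ^ i * y ^ j) = 0 := by
  have hxd : (PowerSeries.X : PowerSeries ℂ) ∣ x := PowerSeries.X_dvd_iff.2 hx
  have hyd : (PowerSeries.X : PowerSeries ℂ) ∣ y := PowerSeries.X_dvd_iff.2 hy
  have : (PowerSeries.X : PowerSeries ℂ) ^ (i + j) ∣ x ^ i * y ^ j := by
    rw [pow_add]; exact mul_dvd_mul (pow_dvd_pow_of_dvd hxd i) (pow_dvd_pow_of_dvd hyd j)
  exact (PowerSeries.X_pow_dvd_iff.1 this) n h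

noncomputable def trunc2 (n : ℕ) (F : MvPowerSeries (Fin 2) ℂ) : MvPolynomial (Fin 2) ℂ :=
  ∑ p ∈ Finset.range (n + 1) ×ˢ Finset.range (n + 1),
    MvPolynomial.monomial (Finsupp.single (0 : Fin 2) p.1 + Finsupp.single (1 : Fin 2) p.2)
      (MvPowerSeries.coeff (Finsupp.single (0 : Fin 2) p.1 + Finsupp.single (1 : Fin 2) p.2) F)

lemma single_apply_0 (i j : ℕ) :
    (Finsupp.single (0 : Fin 2) i + Finsupp.single (1 : Fin 2) j) 0 = i := by simp

lemma single_apply_1 (i j : ℕ) :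
    (Finsupp.single (0 : Fin 2) i + Finsupp.single (1 : Fin 2) j) 1 = j := by simp

lemma coeff_trunc2 (n : ℕ) (F : MvPowerSeries (Fin 2) ℂ) (d : Fin 2 →₀ ℕ) :
    MvPolynomial.coeff d (trunc2 n F) =
      if d 0 ≤ n ∧ d 1 ≤ n then MvPowerSeries.coeff d F else 0 := by
  rw [trunc2]
  rw [MvPolynomial.coeff_sum]
  simp only [MvPolynomial.coeff_monomial]
  by_cases h : d 0 ≤ n ∧ d 1 ≤ n
  · rw [if_pos h]
    rw [Finset.sum_eq_single (d 0, d 1)]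
    · rw [if_pos (fin2_eta d), fin2_eta d]
    · rintro ⟨i, j⟩ hmem hne
      rw [if_neg]
      intro he
      apply hne
      have h0 := congrArg (fun f => f 0) he
      have h1 := congrArg (fun f => f 1) he
      simp only [single_apply_0, single_apply_1] at h0 h1
      simp [Prod.ext_iff, h0, h1]
    · intro hmem
      exfalso
      exact hmem (Finset.mem_product.2 ⟨Finset.mem_range.2 (Nat.lt_succ_of_le h.1),
        Finset.mem_range.2 (Nat.lt_succ_of_le h.2)⟩)
  · rw [if_neg h]
    apply Finset.sum_eq_zero
    rintro ⟨i, j⟩ hmem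
    rw [if_neg]
    intro he
    apply h
    have h0 := congrArg (fun f => f 0) he
    have h1 := congrArg (fun f => f 1) he
    simp only [single_apply_0, single_apply_1] at h0 h1
    rw [← h0, ← h1]
    simp only [Finset.mem_product, Finset.mem_range] at hmem
    exact ⟨Nat.lt_succ_iff.1 hmem.1, Nat.lt_succ_iff.1 hmem.2⟩

lemma aeval_monomial2 (x y : PowerSeries ℂ) (d : Fin 2 →₀ ℕ) (c : ℂ) :
    MvPolynomial.aeval ![x, y] (MvPolynomial.monomial d c) = c • (x ^ (d 0) * y ^ (d 1)) := by
  rw [MvPolynomial.aeval_monomial]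
  rw [Finsupp.prod_fintype _ _ (fun i => pow_zero _)]
  rw [Fin.prod_univ_two]
  simp [Algebra.smul_def]

lemma coeff_pcomp_eq (F : MvPowerSeries (Fin 2) ℂ) (x y : PowerSeries ℂ)
    (hx : PowerSeries.constantCoeff x = 0) (hy : PowerSeries.constantCoeff y = 0)
    {n N : ℕ} (hnN : n ≤ N) :
    PowerSeries.coeff n (pcomp F x y) =
      PowerSeries.coeff n (MvPolynomial.aeval ![x, y] (trunc2 N F)) := by
  have hR : PowerSeries.coeff n (MvPolynomial.aeval ![x, y] (trunc2 N F)) =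
      ∑ p ∈ Finset.range (N + 1) ×ˢ Finset.range (N + 1),
        MvPowerSeries.coeff (Finsupp.single (0 : Fin 2) p.1 + Finsupp.single (1 : Fin 2) p.2) F *
          PowerSeries.coeff n (x ^ p.1 * y ^ p.2) := by
    rw [trunc2, map_sum, map_sum]
    refine Finset.sum_congr rfl ?_
    rintro ⟨i, j⟩ hmem
    rw [aeval_monomial2, single_apply_0, single_apply_1, PowerSeries.coeff_smul, smul_eq_mul]
  rw [hR, pcomp, PowerSeries.coeff_mk]
  refine Finset.sum_subset ?_ ?_
  · exact Finset.product_subset_product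
      (Finset.range_subset_range.2 (by omega)) (Finset.range_subset_range.2 (by omega))
  · rintro ⟨i, j⟩ hmem hnot
    rw [coeff_vanish x y hx hy, mul_zero]
    simp only [Finset.mem_product, Finset.mem_range] at hnot ⊢
    omega

lemma coeff_aeval_congr (x y : PowerSeries ℂ)
    (hx : PowerSeries.constantCoeff x = 0) (hy : PowerSeries.constantCoeff y = 0)
    (n : ℕ) (p q : MvPolynomial (Fin 2) ℂ)
    (h : ∀ d : Fin 2 →₀ ℕ, d 0 + d 1 ≤ n → MvPolynomial.coeff d p = MvPolynomial.coeff d q) :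
    PowerSeries.coeff n (MvPolynomial.aeval ![x, y] p) =
      PowerSeries.coeff n (MvPolynomial.aeval ![x, y] q) := by
  have key : ∀ r : MvPolynomial (Fin 2) ℂ, r.support ⊆ p.support ∪ q.support →
      PowerSeries.coeff n (MvPolynomial.aeval ![x, y] r) =
        ∑ d ∈ p.support ∪ q.support,
          MvPolynomial.coeff d r * PowerSeries.coeff n (x ^ (d 0) * y ^ (d 1)) := by
    intro r hr
    conv_lhs => rw [r.as_sum, map_sum, map_sum]
    rw [Finset.sum_subset hr]
    · refine Finset.sum_congr rfl fun d _ => ?_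
      rw [aeval_monomial2, PowerSeries.coeff_smul, smul_eq_mul]
    · intro d _ hd
      rw [MvPolynomial.notMem_support_iff.1 hd]
      simp
  rw [key p Finset.subset_union_left, key q Finset.subset_union_right]
  refine Finset.sum_congr rfl fun d _ => ?_
  by_cases hd : d 0 + d 1 ≤ n
  · rw [h d hd]
  · rw [coeff_vanish x y hx hy (by omega), mul_zero, mul_zero]

lemma coeff_trunc2_mul (n : ℕ) (F G : MvPowerSeries (Fin 2) ℂ) (d : Fin 2 →₀ ℕ)
    (hd : d 0 + d 1 ≤ n) :
    MvPolynomial.coeff d (trunc2 n (F * G)) =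
      MvPolynomial.coeff d (trunc2 n F * trunc2 n G) := by
  rw [coeff_trunc2, if_pos ⟨by omega, by omega⟩, MvPolynomial.coeff_mul,
    MvPowerSeries.coeff_mul]
  refine Finset.sum_congr rfl fun uv huv => ?_
  have hsum : uv.1 + uv.2 = d := Finset.HasAntidiagonal.mem_antidiagonal.1 huv
  have h1 : uv.1 0 ≤ n := by
    have := congrArg (fun f => f 0) hsum; simp at this; omega
  have h2 : uv.1 1 ≤ n := by
    have := congrArg (fun f => f 1) hsum; simp at this; omega
  have h3 : uv.2 0 ≤ n := by
    have := congrArg (fun f => f 0) hsum; simp at this; omega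
  have h4 : uv.2 1 ≤ n := by
    have := congrArg (fun f => f 1) hsum; simp at this; omega
  rw [coeff_trunc2, coeff_trunc2, if_pos ⟨h1, h2⟩, if_pos ⟨h3, h4⟩]

lemma pcomp_mul (F G : MvPowerSeries (Fin 2) ℂ) (x y : PowerSeries ℂ)
    (hx : PowerSeries.constantCoeff x = 0) (hy : PowerSeries.constantCoeff y = 0) :
    pcomp (F * G) x y = pcomp F x y * pcomp G x y := by
  ext n
  rw [coeff_pcomp_eq (F * G) x y hx hy le_rfl,
    coeff_aeval_congr x y hx hy n _ _ (coeff_trunc2_mul n F G),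
    map_mul, PowerSeries.coeff_mul, PowerSeries.coeff_mul]
  refine Finset.sum_congr rfl fun ab hab => ?_
  have h : ab.1 + ab.2 = n := Finset.HasAntidiagonal.mem_antidiagonal.1 hab
  rw [← coeff_pcomp_eq F x y hx hy (by omega : ab.1 ≤ n),
    ← coeff_pcomp_eq G x y hx hy (by omega : ab.2 ≤ n)]

lemma pcomp_add (F G : MvPowerSeries (Fin 2) ℂ) (x y : PowerSeries ℂ) :
    pcomp (F + G) x y = pcomp F x y + pcomp G x y := by
  ext n
  simp [pcomp, add_mul, Finset.sum_add_distrib]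

lemma pcomp_sub (F G : MvPowerSeries (Fin 2) ℂ) (x y : PowerSeries ℂ) :
    pcomp (F - G) x y = pcomp F x y - pcomp G x y := by
  ext n
  simp [pcomp, sub_mul, Finset.sum_sub_distrib]

lemma pcomp_smul (a : ℂ) (F : MvPowerSeries (Fin 2) ℂ) (x y : PowerSeries ℂ) :
    pcomp (a • F) x y = a • pcomp F x y := by
  ext n
  simp [pcomp, Finset.mul_sum, mul_assoc]


/-- **Polar excess versus GSV-index (local identity).**
Suppose `g·ω = k·df + f·η` componentwise for `ω = P dx + Q dy` (with `η = ex dx + ey dy`),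
and let `γ = (x, y)` be a formal parametrization with `f∘γ = 0`, `g∘γ ≠ 0`, `k∘γ ≠ 0`
and `(∂ₓf∘γ, ∂_yf∘γ) ≠ (0, 0)`. Then:
(1) for every `(a, b) ∈ ℂ²`, `(g∘γ)·((aP + bQ)∘γ) = (k∘γ)·((a∂ₓf + b∂_yf)∘γ)`;
(2) `min(ord_t(P∘γ), ord_t(Q∘γ)) = ord_t(k∘γ) − ord_t(g∘γ) + min(ord_t(∂ₓf∘γ), ord_t(∂_yf∘γ))`;
(3) for any `H` with `H∘γ ≠ 0`, the relative polar excess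
`(𝒫^ω, γ) − (𝒫^{d(f/H)}, γ)` equals `[ord_t(k∘γ) − ord_t(g∘γ)] + ord_t(H∘γ)`,
where `d(f/H)` has numerator components `(H∂ₓf − f∂ₓH, H∂_yf − f∂_yH)` and denominator `H²`. -/
theorem stmt_5 (P Q f g k ex ey : MvPowerSeries (Fin 2) ℂ)
    (hdecP : g * P = k * pderiv2 0 f + f * ex)
    (hdecQ : g * Q = k * pderiv2 1 f + f * ey)
    (x y : PowerSeries ℂ)
    (hx0 : PowerSeries.constantCoeff x = 0) (hy0 : PowerSeries.constantCoeff y = 0)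
    (hf : pcomp f x y = 0) (hg : pcomp g x y ≠ 0) (hk : pcomp k x y ≠ 0)
    (hdf : ¬(pcomp (pderiv2 0 f) x y = 0 ∧ pcomp (pderiv2 1 f) x y = 0)) :
    (∀ a b : ℂ,
        pcomp g x y * pcomp (a • P + b • Q) x y
          = pcomp k x y * pcomp (a • pderiv2 0 f + b • pderiv2 1 f) x y)
    ∧ ((min (pcomp P x y).order (pcomp Q x y).order).toNat : ℤ)
        = ((pcomp k x y).order.toNat : ℤ) - ((pcomp g x y).order.toNat : ℤ)
          + ((min (pcomp (pderiv2 0 f) x y).order (pcomp (pderiv2 1 f) x y).order).toNat : ℤ)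
    ∧ ∀ H : MvPowerSeries (Fin 2) ℂ, pcomp H x y ≠ 0 →
        ((min (pcomp P x y).order (pcomp Q x y).order).toNat : ℤ)
          - (((min (pcomp (H * pderiv2 0 f - f * pderiv2 0 H) x y).order
                (pcomp (H * pderiv2 1 f - f * pderiv2 1 H) x y).order).toNat : ℤ)
              - ((pcomp (H ^ 2) x y).order.toNat : ℤ))
        = (((pcomp k x y).order.toNat : ℤ) - ((pcomp g x y).order.toNat : ℤ))
          + ((pcomp H x y).order.toNat : ℤ) := by
  have hgP : pcomp g x y * pcomp P x y = pcomp k x y * pcomp (pderiv2 0 f) x y := by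
    have := congrArg (fun F => pcomp F x y) hdecP
    simpa [pcomp_mul _ _ _ _ hx0 hy0, pcomp_add, hf] using this
  have hgQ : pcomp g x y * pcomp Q x y = pcomp k x y * pcomp (pderiv2 1 f) x y := by
    have := congrArg (fun F => pcomp F x y) hdecQ
    simpa [pcomp_mul _ _ _ _ hx0 hy0, pcomp_add, hf] using this
  have o1 : (pcomp g x y).order + (pcomp P x y).order
      = (pcomp k x y).order + (pcomp (pderiv2 0 f) x y).order := by
    rw [← PowerSeries.order_mul, ← PowerSeries.order_mul, hgP]
  have o2 : (pcomp g x y).order + (pcomp Q x y).order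
      = (pcomp k x y).order + (pcomp (pderiv2 1 f) x y).order := by
    rw [← PowerSeries.order_mul, ← PowerSeries.order_mul, hgQ]
  have minEq : (pcomp g x y).order + min (pcomp P x y).order (pcomp Q x y).order
      = (pcomp k x y).order
        + min (pcomp (pderiv2 0 f) x y).order (pcomp (pderiv2 1 f) x y).order := by
    rw [← min_add_add_left, ← min_add_add_left, o1, o2]
  have hgo : (pcomp g x y).order ≠ ⊤ := by rwa [ne_eq, PowerSeries.order_eq_top]
  have hko : (pcomp k x y).order ≠ ⊤ := by rwa [ne_eq, PowerSeries.order_eq_top]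
  have hmf : min (pcomp (pderiv2 0 f) x y).order (pcomp (pderiv2 1 f) x y).order ≠ ⊤ := by
    rw [ne_eq, _root_.min_eq_top, PowerSeries.order_eq_top, PowerSeries.order_eq_top]
    exact hdf
  have hmpq : min (pcomp P x y).order (pcomp Q x y).order ≠ ⊤ := by
    intro h
    rw [h] at minEq
    have ht : (pcomp g x y).order + (⊤ : ℕ∞) = ⊤ := by simp [hgo]
    rw [ht] at minEq
    exact (WithTop.add_ne_top.2 ⟨hko, hmf⟩) minEq.symm
  lift (pcomp g x y).order to ℕ using hgo with og hog
  lift (pcomp k x y).order to ℕ using hko with ok hok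
  lift min (pcomp (pderiv2 0 f) x y).order (pcomp (pderiv2 1 f) x y).order to ℕ
    using hmf with mf hmf2
  lift min (pcomp P x y).order (pcomp Q x y).order to ℕ using hmpq with mpq hmpq2
  have hnat : og + mpq = ok + mf := by exact_mod_cast minEq
  refine ⟨?_, ?_, ?_⟩
  · intro a b
    rw [pcomp_add, pcomp_smul, pcomp_smul, pcomp_add, pcomp_smul, pcomp_smul,
      mul_add, mul_add, mul_smul_comm, mul_smul_comm, mul_smul_comm, mul_smul_comm,
      hgP, hgQ]
  · simp only [ENat.toNat_coe]
    omega
  · intro H hH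
    have hHx : pcomp (H * pderiv2 0 f - f * pderiv2 0 H) x y
        = pcomp H x y * pcomp (pderiv2 0 f) x y := by
      rw [pcomp_sub, pcomp_mul _ _ _ _ hx0 hy0, pcomp_mul _ _ _ _ hx0 hy0, hf, zero_mul,
        sub_zero]
    have hHy : pcomp (H * pderiv2 1 f - f * pderiv2 1 H) x y
        = pcomp H x y * pcomp (pderiv2 1 f) x y := by
      rw [pcomp_sub, pcomp_mul _ _ _ _ hx0 hy0, pcomp_mul _ _ _ _ hx0 hy0, hf, zero_mul,
        sub_zero]
    have hH2 : pcomp (H ^ 2) x y = pcomp H x y * pcomp H x y := by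
      rw [sq, pcomp_mul _ _ _ _ hx0 hy0]
    have hHo : (pcomp H x y).order ≠ ⊤ := by rwa [ne_eq, PowerSeries.order_eq_top]
    lift (pcomp H x y).order to ℕ using hHo with oh hoh
    rw [hHx, hHy, hH2, PowerSeries.order_mul, PowerSeries.order_mul, PowerSeries.order_mul,
      ← hoh, min_add_add_left, ← hmf2, ← Nat.cast_add, ← Nat.cast_add]
    simp only [ENat.toNat_coe]
    omega
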